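/- For 0 < p < 1, E|(ξ₁ + ξ₂)/√2|^{-p} = 2^{p/2} Γ(1-p) / Γ(1-p/2)², where ξ₁, ξ₂ are independent and uniform on the unit circle in ℂ. -/

import Mathlib

open Real Complex MeasureTheory Set intervalIntegral

lemma abs_exp_add_exp (s t : ℝ) :
    ‖Complex.exp (s*Complex.I) + Complex.exp (t*Complex.I)‖
      = 2 * |Real.cos ((s-t)/2)| := by
  have h1 : Complex.exp (s*Complex.I) + Complex.exp (t*Complex.I)
      = ((Real.cos s + Real.cos t : ℝ) : ℂ) + ((Real.sin s + Real.sin t : ℝ) : ℂ) * Complex.I := by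
    rw [Complex.exp_mul_I, Complex.exp_mul_I]
    push_cast [← Complex.ofReal_cos, ← Complex.ofReal_sin]
    ring
  rw [h1, Complex.norm_add_mul_I]
  have key : (Real.cos s + Real.cos t)^2 + (Real.sin s + Real.sin t)^2
      = (2 * |Real.cos ((s-t)/2)|)^2 := by
    obtain ⟨c, d, rfl, rfl⟩ : ∃ c d, c + d = s ∧ c - d = t := ⟨(s+t)/2, (s-t)/2, by ring, by ring⟩
    have hd : (c + d - (c - d))/2 = d := by ring
    rw [hd, mul_pow, _root_.sq_abs, Real.cos_add, Real.cos_sub, Real.sin_add, Real.sin_sub]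
    nlinarith [Real.sin_sq_add_cos_sq c, Real.sin_sq_add_cos_sq d]
  rw [key, Real.sqrt_sq (by positivity)]

lemma pt_lemma (p s t : ℝ) :
    ‖(Complex.exp (s * Complex.I) + Complex.exp (t * Complex.I)) /
        (Real.sqrt 2 : ℂ)‖ ^ (-p)
      = Real.sqrt 2 ^ (-p) * |Real.cos ((s-t)/2)| ^ (-p) := by
  rw [norm_div, abs_exp_add_exp, Complex.norm_of_nonneg (Real.sqrt_nonneg 2)]
  have h2 : 2 * |Real.cos ((s-t)/2)| / Real.sqrt 2 = Real.sqrt 2 * |Real.cos ((s-t)/2)| := by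
    rw [div_eq_iff (by positivity : Real.sqrt 2 ≠ 0)]
    nth_rewrite 1 [← Real.mul_self_sqrt (by norm_num : (0:ℝ) ≤ 2)]
    ring
  rw [h2, Real.mul_rpow (Real.sqrt_nonneg 2) (abs_nonneg _)]

lemma real_beta {a b : ℝ} (ha : 0 < a) (hb : 0 < b) :
    ∫ x in (0:ℝ)..1, x^(a-1)*(1-x)^(b-1) = Real.Gamma a * Real.Gamma b / Real.Gamma (a+b) := by
  have h := Complex.Gamma_mul_Gamma_eq_betaIntegral (s := (a:ℂ)) (t := (b:ℂ))
    (by simpa using ha) (by simpa using hb)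
  have hbeta : Complex.betaIntegral a b = ((∫ x in (0:ℝ)..1, x^(a-1)*(1-x)^(b-1) : ℝ) : ℂ) := by
    rw [Complex.betaIntegral, ← intervalIntegral.integral_ofReal]
    refine intervalIntegral.integral_congr fun x hx => ?_
    rw [Set.uIcc_of_le (by norm_num : (0:ℝ) ≤ 1)] at hx
    rw [show ((a:ℂ)-1) = ((a-1:ℝ):ℂ) by push_cast; ring,
      show ((b:ℂ)-1) = ((b-1:ℝ):ℂ) by push_cast; ring,
      show (1 - (x:ℂ)) = ((1-x:ℝ):ℂ) by push_cast; ring,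
      ← Complex.ofReal_cpow hx.1, ← Complex.ofReal_cpow (by linarith [hx.2] : (0:ℝ) ≤ 1-x),
      ← Complex.ofReal_mul]
  rw [hbeta, ← Complex.ofReal_add, Complex.Gamma_ofReal, Complex.Gamma_ofReal,
    Complex.Gamma_ofReal] at h
  have hne : Real.Gamma (a+b) ≠ 0 := (Real.Gamma_pos_of_pos (by linarith)).ne'
  field_simp
  norm_cast at h
  linarith [h]

lemma beta_integrable {a b : ℝ} (ha : 0 < a) (hb : 0 < b) :
    IntervalIntegrable (fun x : ℝ => x^(a-1)*(1-x)^(b-1)) volume 0 1 := by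
  have h := (Complex.betaIntegral_convergent (u := (a:ℂ)) (v := (b:ℂ))
    (by simpa using ha) (by simpa using hb)).norm
  refine h.congr_ae ((MeasureTheory.ae_restrict_mem measurableSet_uIoc).mono fun x hx => ?_)
  rw [Set.uIoc_of_le (by norm_num : (0:ℝ) ≤ 1)] at hx
  have hx0 : (0:ℝ) ≤ x := hx.1.le
  have hx1 : (0:ℝ) ≤ 1 - x := by linarith [hx.2]
  simp only [norm_mul]
  rw [show ((a:ℂ)-1) = ((a-1:ℝ):ℂ) by push_cast; ring,
    show ((b:ℂ)-1) = ((b-1:ℝ):ℂ) by push_cast; ring,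
    show (1 - (x:ℂ)) = ((1-x:ℝ):ℂ) by push_cast; ring,
    ← Complex.ofReal_cpow hx0, ← Complex.ofReal_cpow hx1,
    Complex.norm_real, Complex.norm_real,
    Real.norm_of_nonneg (Real.rpow_nonneg hx0 _),
    Real.norm_of_nonneg (Real.rpow_nonneg hx1 _)]

lemma cos_subst {p : ℝ} (hp0 : 0 < p) (hp1 : p < 1) :
    IntegrableOn (fun v => Real.cos v ^ (-p)) (Ioo 0 (π/2)) volume ∧
    ∫ x in Ioo (0:ℝ) 1, x^((1-p)/2-1)*(1-x)^((1/2:ℝ)-1)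
      = 2 * ∫ v in Ioo (0:ℝ) (π/2), Real.cos v ^ (-p) := by
  set s : Set ℝ := Ioo 0 (π/2) with hs
  set f : ℝ → ℝ := fun v => Real.cos v ^ 2 with hf
  set f' : ℝ → ℝ := fun v => 2 * Real.cos v * (-Real.sin v) with hf'
  set g : ℝ → ℝ := fun y => y^((1-p)/2-1)*(1-y)^((1/2:ℝ)-1) with hg
  have hderiv : ∀ x ∈ s, HasDerivWithinAt f (f' x) s x := by
    intro x _
    have := (Real.hasDerivAt_cos x).fun_pow 2
    simpa [hf, hf', mul_comm, mul_assoc] using this.hasDerivWithinAt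
  have hcospos : ∀ x ∈ s, 0 < Real.cos x := fun x hx =>
    Real.cos_pos_of_mem_Ioo ⟨by linarith [hx.1, Real.pi_pos], hx.2⟩
  have hsinpos : ∀ x ∈ s, 0 < Real.sin x := fun x hx =>
    Real.sin_pos_of_pos_of_lt_pi hx.1 (by linarith [hx.2, Real.pi_pos])
  have hinj : InjOn f s := by
    intro x hx y hy hxy
    have h1 := hcospos x hx; have h2 := hcospos y hy
    have hc : Real.cos x = Real.cos y := by
      simp only [hf] at hxy; nlinarith
    exact Real.injOn_cos ⟨hx.1.le, by linarith [hx.2, Real.pi_pos]⟩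
      ⟨hy.1.le, by linarith [hy.2, Real.pi_pos]⟩ hc
  have himg : f '' s = Ioo 0 1 := by
    ext y
    constructor
    · rintro ⟨v, hv, rfl⟩
      have h1 := hcospos v hv
      have h2 : Real.cos v < 1 := by
        have := Real.strictAntiOn_cos (left_mem_Icc.mpr Real.pi_pos.le)
          ⟨hv.1.le, by linarith [hv.2, Real.pi_pos]⟩ hv.1
        simpa using this
      refine ⟨?_, ?_⟩ <;> simp only [hf] <;> nlinarith
    · intro hy
      refine ⟨Real.arccos (Real.sqrt y), ⟨?_, ?_⟩, ?_⟩
      · exact Real.arccos_pos.mpr (by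
          rw [show (1:ℝ) = Real.sqrt 1 by simp]
          exact Real.sqrt_lt_sqrt hy.1.le hy.2)
      · exact Real.arccos_lt_pi_div_two.mpr (Real.sqrt_pos.mpr hy.1)
      · simp only [hf]
        rw [Real.cos_arccos (by linarith [Real.sqrt_nonneg y]) (by
            rw [show (1:ℝ) = Real.sqrt 1 by simp]
            exact Real.sqrt_le_sqrt hy.2.le), Real.sq_sqrt hy.1.le]
  have heq : EqOn (fun x => |f' x| • g (f x)) (fun v => 2 * Real.cos v ^ (-p)) s := by
    intro v hv
    have h1 := hcospos v hv; have h2 := hsinpos v hv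
    simp only [hf, hf', hg, smul_eq_mul]
    rw [abs_of_nonpos (by nlinarith), ← Real.rpow_natCast (Real.cos v) 2,
      ← Real.rpow_mul h1.le,
      show (1 : ℝ) - Real.cos v ^ ((2:ℕ):ℝ) = Real.sin v ^ (2:ℕ) by
        rw [Real.rpow_natCast]; nlinarith [Real.sin_sq_add_cos_sq v],
      ← Real.rpow_natCast (Real.sin v) 2, ← Real.rpow_mul h2.le]
    push_cast
    rw [show (2:ℝ) * ((1-p)/2-1) = -1 + -p by ring, show (2:ℝ) * (1/2-1) = -1 by ring,
      Real.rpow_add h1, Real.rpow_neg_one, Real.rpow_neg_one]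
    field_simp
  have hgint : IntegrableOn g (Ioo 0 1) volume := by
    have := (beta_integrable (a := (1-p)/2) (b := 1/2) (by linarith) (by norm_num))
    rw [intervalIntegrable_iff_integrableOn_Ioc_of_le (by norm_num)] at this
    exact this.mono_set Ioo_subset_Ioc_self
  have hiff := (MeasureTheory.integrableOn_image_iff_integrableOn_abs_deriv_smul
    measurableSet_Ioo hderiv hinj g)
  rw [himg] at hiff
  have hint2 : IntegrableOn (fun x => |f' x| • g (f x)) s volume := hiff.mp hgint
  constructor
  · have : IntegrableOn (fun v => 2 * Real.cos v ^ (-p)) s volume :=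
      hint2.congr_fun heq measurableSet_Ioo
    have h3 : IntegrableOn (fun x => (1/2 : ℝ) * (2 * Real.cos x ^ (-p))) s volume :=
      this.const_mul _
    exact h3.congr_fun (fun x _ => by ring) measurableSet_Ioo
  · have hval := MeasureTheory.integral_image_eq_integral_abs_deriv_smul
      measurableSet_Ioo hderiv hinj g
    rw [himg] at hval
    rw [hval, MeasureTheory.setIntegral_congr_fun measurableSet_Ioo heq,
      MeasureTheory.integral_const_mul]

theorem stmt9 (p : ℝ) (hp0 : 0 < p) (hp1 : p < 1) :
    (1 / (2 * Real.pi)) ^ 2 *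
        ∫ s in (0:ℝ)..(2 * Real.pi), ∫ t in (0:ℝ)..(2 * Real.pi),
          ‖(Complex.exp (s * Complex.I) + Complex.exp (t * Complex.I)) /
            (Real.sqrt 2 : ℂ)‖ ^ (-p)
      = 2 ^ (p / 2) * Real.Gamma (1 - p) / Real.Gamma (1 - p / 2) ^ 2 := by
  obtain ⟨hIoo, hIooval⟩ := cos_subst hp0 hp1
  set B : ℝ := Real.Gamma ((1-p)/2) * Real.Gamma (1/2) / Real.Gamma ((1-p)/2 + 1/2) with hB
  -- value of ∫ over Ioo 0 (π/2)
  have hJval : ∫ v in Ioo (0:ℝ) (π/2), Real.cos v ^ (-p) = B / 2 := by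
    have h1 : ∫ x in Ioo (0:ℝ) 1, x^((1-p)/2-1)*(1-x)^((1/2:ℝ)-1) = B := by
      rw [← MeasureTheory.integral_Ioc_eq_integral_Ioo,
        ← intervalIntegral.integral_of_le (by norm_num : (0:ℝ) ≤ 1)]
      exact real_beta (by linarith) (by norm_num)
    rw [h1] at hIooval; linarith
  set h : ℝ → ℝ := fun u => |Real.cos u| ^ (-p) with hh
  have hpi : (0:ℝ) < π := Real.pi_pos
  -- h agrees with cos^(-p) on Ioo 0 (π/2)
  have hagree : ∀ u ∈ Icc (0:ℝ) (π/2), h u = Real.cos u ^ (-p) := by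
    intro u hu
    have : 0 ≤ Real.cos u := Real.cos_nonneg_of_mem_Icc ⟨by linarith [hu.1], hu.2⟩
    simp [hh, _root_.abs_of_nonneg this]
  have hint1 : IntervalIntegrable h volume 0 (π/2) := by
    rw [intervalIntegrable_iff_integrableOn_Ioc_of_le (by linarith),
      integrableOn_Ioc_iff_integrableOn_Ioo]
    exact hIoo.congr_fun (fun x hx =>
      (hagree x ⟨hx.1.le, hx.2.le⟩).symm) measurableSet_Ioo
  have hJ1 : ∫ u in (0:ℝ)..(π/2), h u = B / 2 := by
    rw [intervalIntegral.integral_of_le (by linarith),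
      MeasureTheory.integral_Ioc_eq_integral_Ioo, ← hJval]
    exact MeasureTheory.setIntegral_congr_fun measurableSet_Ioo
      (fun x hx => hagree x ⟨hx.1.le, hx.2.le⟩)
  have hrefl : ∀ x : ℝ, h (π - x) = h x := fun x => by
    simp [hh, Real.cos_pi_sub]
  have hint2 : IntervalIntegrable h volume (π/2) π := by
    have h2 := hint1.comp_sub_left π
    simp only [hrefl] at h2
    rw [sub_zero, show π - π/2 = π/2 by ring] at h2
    exact h2.symm
  have hJ2 : ∫ u in (π/2:ℝ)..π, h u = B / 2 := by
    have h2 := intervalIntegral.integral_comp_sub_left (a := (0:ℝ)) (b := π/2) h π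
    simp only [hrefl, sub_zero] at h2
    rw [show π - π/2 = π/2 by ring] at h2
    rw [← h2, hJ1]
  have hint0π : IntervalIntegrable h volume 0 π := hint1.trans hint2
  have hJπ : ∫ u in (0:ℝ)..π, h u = B := by
    rw [← intervalIntegral.integral_add_adjacent_intervals hint1 hint2, hJ1, hJ2]; ring
  have hEven : ∀ x : ℝ, h (-x) = h x := fun x => by simp [hh]
  have hintneg : IntervalIntegrable h volume (-π) 0 := by
    have := (IntervalIntegrable.iff_comp_neg).mp hint0π
    simp only [hEven, neg_zero] at this
    exact this.symm
  have hintall : IntervalIntegrable h volume (-π) π := hintneg.trans hint0π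
  set g₀ : ℝ → ℝ := fun u => h (u/2) with hg₀
  have hG : IntervalIntegrable g₀ volume (-(2*π)) (2*π) := by
    have h2 := hintall.comp_mul_right (c := 1/2)
    rw [show (-π)/(1/2:ℝ) = -(2*π) by ring, show (π)/(1/2:ℝ) = 2*π by ring] at h2
    simpa only [hg₀, mul_one_div] using h2
  have hper : ∀ x : ℝ, g₀ (x - 2*π) = g₀ x := fun x => by
    have h2 : (x - 2*π)/2 = x/2 - π := by ring
    simp [hg₀, h2, hh, Real.cos_sub_pi]
  have hItot : ∫ u in (0:ℝ)..(2*π), g₀ u = 2 * B := by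
    have := intervalIntegral.integral_comp_div (a := (0:ℝ)) (b := 2*π) (c := 2) (f := h)
      (by norm_num)
    simp only [hg₀]
    rw [this]
    norm_num [hJπ]
  -- inner integral is constant for s ∈ [0, 2π]
  have hinner : ∀ s ∈ Icc (0:ℝ) (2*π), ∫ t in (0:ℝ)..(2*π), g₀ (s - t) = 2 * B := by
    intro s hsmem
    obtain ⟨hs1, hs2⟩ := hsmem
    have hsub : ∀ c d : ℝ, c ∈ Icc (-(2*π)) (2*π) → d ∈ Icc (-(2*π)) (2*π) →
        IntervalIntegrable g₀ volume c d := by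
      intro c d hc hd
      refine hG.mono_set ?_
      rw [Set.uIcc_of_le (by linarith : -(2*π) ≤ 2*π)]
      exact Set.uIcc_subset_Icc hc hd
    have m1 : s - 2*π ∈ Icc (-(2*π)) (2*π) := ⟨by linarith, by linarith⟩
    have m0 : (0:ℝ) ∈ Icc (-(2*π)) (2*π) := ⟨by linarith, by linarith⟩
    have ms : s ∈ Icc (-(2*π)) (2*π) := ⟨by linarith, hs2⟩
    have m2 : (2*π:ℝ) ∈ Icc (-(2*π)) (2*π) := ⟨by linarith, by linarith⟩
    rw [intervalIntegral.integral_comp_sub_left g₀ s, sub_zero]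
    rw [← intervalIntegral.integral_add_adjacent_intervals (hsub _ _ m1 m0) (hsub _ _ m0 ms)]
    have hshift : ∫ u in (s-2*π)..(0:ℝ), g₀ u = ∫ u in s..(2*π), g₀ u := by
      have := intervalIntegral.integral_comp_sub_right (a := s) (b := 2*π) g₀ (2*π)
      simp only [hper] at this
      rw [this]
      norm_num
    rw [hshift, add_comm,
      intervalIntegral.integral_add_adjacent_intervals (hsub _ _ m0 ms) (hsub _ _ ms m2), hItot]
  -- rewrite the double integral
  have houter : ∫ s in (0:ℝ)..(2*π), (∫ t in (0:ℝ)..(2*π),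
      ‖(Complex.exp (s * Complex.I) + Complex.exp (t * Complex.I)) /
        (Real.sqrt 2 : ℂ)‖ ^ (-p))
      = 2*π * (Real.sqrt 2 ^ (-p) * (2 * B)) := by
    rw [intervalIntegral.integral_congr (g := fun _ => Real.sqrt 2 ^ (-p) * (2 * B)) ?_]
    · rw [intervalIntegral.integral_const]; simp
    · intro s hsmem
      rw [Set.uIcc_of_le (by linarith : (0:ℝ) ≤ 2*π)] at hsmem
      have hrw : ∀ t : ℝ, ‖(Complex.exp (s * Complex.I) +
          Complex.exp (t * Complex.I)) / (Real.sqrt 2 : ℂ)‖ ^ (-p)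
          = Real.sqrt 2 ^ (-p) * g₀ (s - t) := fun t => by
        rw [pt_lemma p s t]
      simp only [hrw]
      rw [intervalIntegral.integral_const_mul, hinner s hsmem]
  rw [houter]
  -- final Gamma computation
  have hdup := Real.Gamma_mul_Gamma_add_half ((1-p)/2)
  rw [show 2*((1-p)/2) = 1-p by ring] at hdup
  have hhalf : (1-p)/2 + 1/2 = 1 - p/2 := by ring
  rw [hhalf] at hdup
  have hG2pos : 0 < Real.Gamma (1 - p/2) := Real.Gamma_pos_of_pos (by linarith)
  have hsqrtpi : Real.sqrt π * Real.sqrt π = π := Real.mul_self_sqrt hpi.le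
  have hsqrt2 : Real.sqrt 2 ^ (-p) = (2:ℝ) ^ (-(p/2)) := by
    rw [Real.sqrt_eq_rpow, ← Real.rpow_mul (by norm_num : (0:ℝ) ≤ 2)]
    ring_nf
  rw [show (1:ℝ)-(1-p) = p by ring] at hdup
  have hG1 : Real.Gamma ((1-p)/2) = Real.Gamma (1-p) * 2^(p:ℝ) * Real.sqrt π / Real.Gamma (1-p/2) := by
    rw [eq_div_iff hG2pos.ne']
    linarith [hdup]
  have hpow : (2:ℝ)^(-(p/2)) * 2^(p:ℝ) = 2^(p/2) := by
    rw [← Real.rpow_add (by norm_num : (0:ℝ) < 2)]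
    ring_nf
  rw [hB, hhalf, Real.Gamma_one_half_eq, hG1, hsqrt2]
  rw [div_pow, one_pow]
  field_simp
  have hGne : Real.Gamma ((2-p)/2) ≠ 0 := by
    rw [show (2-p)/2 = 1-p/2 by ring]; exact hG2pos.ne'
  have e : (2:ℝ)^(-p/2) * 2^(p:ℝ) = 2^(p/2) := by
    rw [show (-p/2:ℝ) = -(p/2) by ring]; exact hpow
  rw [div_eq_div_iff (by positivity) (by positivity)]
  linear_combination (Real.Gamma (1-p)*Real.Gamma ((2-p)/2)^2*((2:ℝ)^(-(p/2))*2^(p:ℝ))) * hsqrtpi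
    + (π*Real.Gamma (1-p)*Real.Gamma ((2-p)/2)^2) * hpow
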